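/- Let ε and μ be real constants with 0 < ε < 1/2 and let W, y, z : ℝ → ℝ be differentiable functions with W(t) < 1 for all t, satisfying the W < 0 branch of the second pinched system: Ẇ = −2z·(1−W) + (μy/(2ε))·(1−W)^(1−1/ε), ẏ = 1, ż = −ε·(1−W)^(1/ε) + (1+μ)/2 (real powers of 1−W > 0). Suppose at some time t₀ that W(t₀) = 0 and z(t₀) = μ·y(t₀)/(4ε). Then Ẇ(t₀) = 0 and the derivative of Ẇ at t₀ equals (1 − 2ε)(μ − 2ε)/(2ε); in particular this is negative if 0 < μ < 2ε (flow curving away from the switching manifold into W < 0) and positive if μ > 2ε (flow curving towards the switching manifold). -/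

import Mathlib

/-- At the tangency line `z/y = μ/(4ε)` of the `W < 0` branch of the second
pinched system `Ẇ = −2z(1−W) + (μy/(2ε))(1−W)^(1−1/ε)`, `ẏ = 1`,
`ż = −ε(1−W)^(1/ε) + (1+μ)/2`: if `W(t₀) = 0` and `z(t₀) = μy(t₀)/(4ε)` then
`Ẇ(t₀) = 0` and `Ẅ(t₀) = (1−2ε)(μ−2ε)/(2ε)`, which is negative if `0 < μ < 2ε`
(flow curving away into `W < 0`) and positive if `μ > 2ε` (flow curving towards
the switching manifold). -/
theorem second_pinch_lower_tangency (ε μ : ℝ) (hε : 0 < ε) (hε' : ε < 1/2)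
    (W y z : ℝ → ℝ)
    (hW : Differentiable ℝ W) (hy : Differentiable ℝ y) (hz : Differentiable ℝ z)
    (hWb : ∀ t, W t < 1)
    (hdW : ∀ t, deriv W t
        = -2 * z t * (1 - W t) + (μ * y t / (2*ε)) * (1 - W t) ^ (1 - 1/ε))
    (hdy : ∀ t, deriv y t = 1)
    (hdz : ∀ t, deriv z t = -ε * (1 - W t) ^ (1/ε) + (1+μ)/2)
    (t₀ : ℝ) (hW0 : W t₀ = 0) (hz0 : z t₀ = μ * y t₀ / (4*ε)) :
    deriv W t₀ = 0 ∧
    deriv (deriv W) t₀ = (1 - 2*ε) * (μ - 2*ε) / (2*ε) ∧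
    (0 < μ → μ < 2*ε → deriv (deriv W) t₀ < 0) ∧
    (2*ε < μ → 0 < deriv (deriv W) t₀) := by
  have hεne : ε ≠ 0 := ne_of_gt hε
  have h1W0 : 1 - W t₀ = 1 := by rw [hW0]; ring
  have hfirst : deriv W t₀ = 0 := by
    rw [hdW t₀, h1W0, Real.one_rpow, hz0]
    field_simp
    ring
  -- derivatives at t₀ as HasDerivAt
  have hWt : HasDerivAt W 0 t₀ := hfirst ▸ (hW t₀).hasDerivAt
  have hyt : HasDerivAt y 1 t₀ := hdy t₀ ▸ (hy t₀).hasDerivAt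
  have hzt : HasDerivAt z (deriv z t₀) t₀ := (hz t₀).hasDerivAt
  have h1W : HasDerivAt (fun t => 1 - W t) 0 t₀ := by
    have := (hasDerivAt_const t₀ (1:ℝ)).sub hWt
    rw [sub_zero] at this; exact this
  have hpow : HasDerivAt (fun t => (1 - W t) ^ (1 - 1/ε)) 0 t₀ := by
    have := h1W.rpow_const (p := 1 - 1/ε) (Or.inl (by rw [h1W0]; norm_num))
    simpa using this
  have hg : HasDerivAt
      (fun t => -2 * z t * (1 - W t) + (μ * y t / (2*ε)) * (1 - W t) ^ (1 - 1/ε))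
      ((-2 * deriv z t₀ * (1 - W t₀) + (-2 * z t₀) * 0)
        + ((μ * 1 / (2*ε)) * (1 - W t₀) ^ (1 - 1/ε) + (μ * y t₀ / (2*ε)) * 0)) t₀ := by
    have h := (((hasDerivAt_const t₀ (-2:ℝ)).mul hzt).mul h1W).add
      ((((hasDerivAt_const t₀ μ).mul hyt).div_const (2*ε)).mul hpow)
    convert h using 1
    · rfl
    · rfl
    · rfl
    · simp only [Pi.mul_apply]; ring
  have hsec : deriv (deriv W) t₀ = (1 - 2*ε) * (μ - 2*ε) / (2*ε) := by
    have hdWf : deriv W = fun t => -2 * z t * (1 - W t)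
        + (μ * y t / (2*ε)) * (1 - W t) ^ (1 - 1/ε) := funext hdW
    rw [hdWf, hg.deriv, h1W0, Real.one_rpow, hdz t₀, h1W0, Real.one_rpow]
    field_simp
    ring
  refine ⟨hfirst, hsec, ?_, ?_⟩
  · intro h1 h2
    rw [hsec]
    apply div_neg_of_neg_of_pos
    · exact mul_neg_of_pos_of_neg (by linarith) (by linarith)
    · linarith
  · intro h1
    rw [hsec]
    apply div_pos
    · exact mul_pos (by linarith) (by linarith)
    · linarith
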